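/- Maximum Nash welfare violates GRP: in the instance with 4 voters, candidates $\{a,b,c,d\}$, $k = 2$, and approvals $A_1 = \{a,d\}$, $A_2 = A_3 = \{a,b\}$, $A_4 = \{c\}$, the fractional committee $\vec{p} = (p_a, p_b, p_c, p_d) = (1, 1/3, 2/3, 0)$ (which uniquely maximizes Nash welfare) violates GRP for $S = \{1,2,3\}$: the GRP lower bound for $S$ equals $3/2$ while $\sum_{c \in A_1 \cup A_2 \cup A_3} p_c = 4/3 < 3/2$. -/

import Mathlib

open Finset

/-- The penalty term in the GRP lower bound for a group `S` of voters:
`max_{T ⊆ S} (|T| * k / n - |⋃_{i ∈ T} A i|)`. -/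
noncomputable def grpPenalty {C : Type*} [DecidableEq C] (n k : ℕ)
    (A : Fin n → Finset C) (S : Finset (Fin n)) : ℝ :=
  S.powerset.sup' ⟨∅, Finset.empty_mem_powerset S⟩
    fun T => (T.card : ℝ) * k / n - ((T.sup A).card : ℝ)

/-- Group resource proportionality: for every group `S` of voters, the probability mass on
candidates approved by some member of `S` is at least `|S| * k / n` minus the penalty. -/
def GRP {C : Type*} [DecidableEq C] (n k : ℕ) (A : Fin n → Finset C) (p : C → ℝ) : Prop :=
  ∀ S : Finset (Fin n),
    (S.card : ℝ) * k / n - grpPenalty n k A S ≤ ∑ c ∈ S.sup A, p c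

lemma pen0 : grpPenalty 4 2 (![{0, 3}, {0, 1}, {0, 1}, {2}] : Fin 4 → Finset (Fin 4)) {0,1,2} = 0 := by
  apply le_antisymm
  · apply Finset.sup'_le
    intro T hT
    fin_cases hT <;> norm_num
    all_goals try exact ⟨0, by decide⟩
    all_goals exact le_trans (by norm_num) (Nat.cast_le.mpr (by decide : 2 ≤ _))
  · have := Finset.le_sup'
      (f := fun T => ((T.card : ℝ) * 2 / 4 -
        (((T.sup (![{0, 3}, {0, 1}, {0, 1}, {2}] : Fin 4 → Finset (Fin 4))).card : ℝ))))
      (Finset.empty_mem_powerset ({0,1,2} : Finset (Fin 4)))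
    simpa [grpPenalty] using this

lemma sup_eq : (({0, 1, 2} : Finset (Fin 4)).sup
    (![{0, 3}, {0, 1}, {0, 1}, {2}] : Fin 4 → Finset (Fin 4))) = {0, 1, 3} := by decide

lemma sum_eq : (∑ c ∈ (({0, 1, 2} : Finset (Fin 4)).sup
      (![{0, 3}, {0, 1}, {0, 1}, {2}] : Fin 4 → Finset (Fin 4))),
    (![1, 1/3, 2/3, 0] : Fin 4 → ℝ) c) = 4 / 3 := by
  rw [sup_eq]
  rw [show ({0,1,3} : Finset (Fin 4)) = insert 0 (insert 1 {3}) from rfl, Finset.sum_insert (by decide), Finset.sum_insert (by decide), Finset.sum_singleton]; norm_num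
  rw [show (![1, 1 / 3, 2 / 3, 0] : Fin 4 → ℝ) 3 = 0 from rfl]; norm_num

/-- The maximum-Nash-welfare committee violates GRP: with 4 voters, candidates
`a = 0`, `b = 1`, `c = 2`, `d = 3`, committee size `k = 2`, and approvals
`A₁ = {a,d}`, `A₂ = A₃ = {a,b}`, `A₄ = {c}`, the fractional committee
`p = (1, 1/3, 2/3, 0)` has GRP lower bound `3/2` for the group `S = {1,2,3}`
(indexed `{0,1,2}`) while `∑_{c ∈ A₁ ∪ A₂ ∪ A₃} p c = 4/3 < 3/2`; in particular `p`
violates GRP. -/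
theorem nash_violates_grp :
    ((({0, 1, 2} : Finset (Fin 4)).card : ℝ) * 2 / 4 -
        grpPenalty 4 2 (![{0, 3}, {0, 1}, {0, 1}, {2}] : Fin 4 → Finset (Fin 4))
          {0, 1, 2} = 3 / 2) ∧
    (∑ c ∈ (({0, 1, 2} : Finset (Fin 4)).sup
          (![{0, 3}, {0, 1}, {0, 1}, {2}] : Fin 4 → Finset (Fin 4))),
        (![1, 1/3, 2/3, 0] : Fin 4 → ℝ) c = 4 / 3) ∧
    ((4 : ℝ) / 3 < 3 / 2) ∧
    ¬ GRP 4 2 (![{0, 3}, {0, 1}, {0, 1}, {2}] : Fin 4 → Finset (Fin 4))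
      (![1, 1/3, 2/3, 0] : Fin 4 → ℝ) := by
  have hcard : (({0, 1, 2} : Finset (Fin 4)).card : ℝ) = 3 := by rw [show (({0,1,2} : Finset (Fin 4)).card) = 3 from by decide]; norm_num
  refine ⟨by rw [pen0, hcard]; norm_num, sum_eq, by norm_num, ?_⟩
  intro h
  have := h {0, 1, 2}
  rw [pen0, hcard, sum_eq] at this
  linarith
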